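/- Let C, D : ℝ → ℝ → ℝ be functions satisfying, for all real n ≥ 1 and k ≥ 1: (Rule 1) C(n,k) ≤ D(n,k) + n, and (Rule 2) for every real x with 1 ≤ x ≤ k, D(n,k) ≤ C(n,x) + D(k/x, k). Then for every integer i ≥ 0, every real n ≥ 1, and every nonincreasing sequence of reals x₀ ≥ x₁ ≥ ⋯ ≥ xᵢ ≥ 1, one has C(n, x₀) ≤ D(n, xᵢ) + Σ_{j=0}^{i−1} D(xⱼ/x_{j+1}, xⱼ) + (i+1)·n. -/

import Mathlib

/-- Unrolled recursion inequality from the proof of the paper's Theorem 1: under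
Rules 1 and 2 alone, for any nonincreasing sequence `x₀ ≥ x₁ ≥ ⋯ ≥ xᵢ ≥ 1`,
`C n x₀ ≤ D n xᵢ + Σ_{j=0}^{i−1} D (xⱼ/x_{j+1}) xⱼ + (i+1)·n`. -/
theorem stmt_2 (C D : ℝ → ℝ → ℝ)
    (rule1 : ∀ n k : ℝ, 1 ≤ n → 1 ≤ k → C n k ≤ D n k + n)
    (rule2 : ∀ n k x : ℝ, 1 ≤ n → 1 ≤ k → 1 ≤ x → x ≤ k → D n k ≤ C n x + D (k / x) k) :
    ∀ i : ℕ, ∀ n : ℝ, 1 ≤ n → ∀ x : ℕ → ℝ,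
      (∀ j, j < i → x (j + 1) ≤ x j) → 1 ≤ x i →
      C n (x 0) ≤ D n (x i) + (∑ j ∈ Finset.range i, D (x j / x (j + 1)) (x j))
        + ((i : ℝ) + 1) * n := by
  intro i
  induction i with
  | zero =>
    intro n hn x _ hx
    simpa using by linarith [rule1 n (x 0) hn hx]
  | succ i ih =>
    intro n hn x hmono hx
    have hstep : x (i + 1) ≤ x i := hmono i (Nat.lt_succ_self i)
    have hxi : 1 ≤ x i := le_trans hx hstep
    have hIH := ih n hn x (fun j hj => hmono j (hj.trans (Nat.lt_succ_self i))) hxi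
    have h2 := rule2 n (x i) (x (i + 1)) hn hxi hx hstep
    have h1 := rule1 n (x (i + 1)) hn hx
    rw [Finset.sum_range_succ]
    push_cast
    linarith
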